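/- Let p>0, ε∈[0,1], δ>0 with δ ≥ (2-ε)p/(1+p). Define f(x)=x^{2-ε}/(x^{2-ε}+p) - ((2-ε)p/(δ(1+p)²))x^δ for x≥0. Then f attains its global maximum on [0,∞) at x=1. -/

import Mathlib

/-- Weighted AM-GM: for `0 ≤ x`, `0 < a ≤ b`, `b * x^a ≤ a * x^b + (b - a)`. -/
lemma amgm_rpow {x a b : ℝ} (hx : 0 ≤ x) (ha : 0 < a) (hab : a ≤ b) :
    b * x ^ a ≤ a * x ^ b + (b - a) := by
  have hb : 0 < b := lt_of_lt_of_le ha hab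
  have hxb : (0:ℝ) ≤ x ^ b := Real.rpow_nonneg hx b
  have h := Real.geom_mean_le_arith_mean2_weighted (w₁ := a / b) (w₂ := (b - a) / b)
    (p₁ := x ^ b) (p₂ := 1) (by positivity) (div_nonneg (by linarith) hb.le) hxb zero_le_one
    (by field_simp; ring)
  rw [Real.one_rpow, mul_one, mul_one] at h
  have hba : b * (a / b) = a := by field_simp
  rw [← Real.rpow_mul hx, hba] at h
  have := mul_le_mul_of_nonneg_left h (le_of_lt hb)
  calc b * x ^ a ≤ b * (a / b * x ^ b + (b - a) / b) := this
    _ = a * x ^ b + (b - a) := by field_simp; try ring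

/-- Key inequality: for `y ≥ 0`, `r > 1`, `p > 0`, `p(r-1) ≤ 1`,
`r (y^r + p)(1 - y) ≤ (1+p)(1 - y^r)`. -/
lemma keyC {y r p : ℝ} (hy : 0 ≤ y) (hr : 1 < r) (hp : 0 < p)
    (hpr : p * (r - 1) ≤ 1) :
    r * (y ^ r + p) * (1 - y) ≤ (1 + p) * (1 - y ^ r) := by
  have hr0 : (0:ℝ) < r := lt_trans one_pos hr
  rcases eq_or_lt_of_le hy with h0 | h0
  · -- y = 0
    rw [← h0, Real.zero_rpow (ne_of_gt hr0)]
    nlinarith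
  · -- y > 0
    have H2 := amgm_rpow hy (show (0:ℝ) < r - 1 by linarith) (show r - 1 ≤ r by linarith)
    have H3 := amgm_rpow hy one_pos (le_of_lt hr)
    rw [Real.rpow_one] at H3
    have e1 : y ^ (r - 1) * y = y ^ r := by
      have e := Real.rpow_add h0 (r - 1) 1
      rw [Real.rpow_one] at e
      rw [← e]; norm_num
    have hψ : 0 ≤ (r - 1) * y ^ r - r * y ^ (r - 1) + 1 := by linarith
    have hk : 0 ≤ y ^ r + (r - 1) - r * y := by linarith
    have key : (r - 1) * ((1 + p) * (1 - y ^ r) - r * (y ^ r + p) * (1 - y)) =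
        r * y * ((r - 1) * y ^ r - r * y ^ (r - 1) + 1)
          + (1 - p * (r - 1)) * (y ^ r + (r - 1) - r * y) := by
      rw [← e1]; ring
    nlinarith [mul_nonneg (mul_nonneg (le_of_lt hr0) hy) hψ,
      mul_nonneg (show (0:ℝ) ≤ 1 - p * (r - 1) by linarith) hk]

/-- The central inequality `(★)`. -/
lemma star_ineq {p a δ : ℝ} (hp : 0 < p) (ha : 0 < a) (hδ : 0 < δ)
    (hcond : a * p ≤ δ * (1 + p)) :
    ∀ x : ℝ, 0 ≤ x →
      a * (x ^ a + p) * (1 - x ^ δ) ≤ δ * (1 + p) * (1 - x ^ a) := by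
  intro x hx
  rcases le_or_gt a δ with hle | hlt
  · -- easy case δ ≥ a
    have L1 : δ * x ^ a ≤ a * x ^ δ + (δ - a) := amgm_rpow hx ha hle
    have sgn : 0 ≤ (1 - x ^ δ) * (1 - x ^ a) := by
      rcases le_or_gt x 1 with h1 | h1
      · have hda : x ^ δ ≤ 1 := Real.rpow_le_one hx h1 (le_of_lt hδ)
        have haa : x ^ a ≤ 1 := Real.rpow_le_one hx h1 (le_of_lt ha)
        nlinarith
      · have hda : 1 ≤ x ^ δ := Real.one_le_rpow (le_of_lt h1) (le_of_lt hδ)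
        have haa : 1 ≤ x ^ a := Real.one_le_rpow (le_of_lt h1) (le_of_lt ha)
        nlinarith
    nlinarith [mul_nonneg (le_of_lt ha) sgn,
      mul_le_mul_of_nonneg_left L1 (show (0:ℝ) ≤ 1 + p by linarith)]
  · -- hard case δ < a: substitute y = x^δ, r = a/δ
    have hr : 1 < a / δ := (one_lt_div hδ).mpr hlt
    have hy : 0 ≤ x ^ δ := Real.rpow_nonneg hx δ
    have hpr : p * (a / δ - 1) ≤ 1 := by
      rw [show a / δ - 1 = (a - δ) / δ by field_simp]
      rw [mul_div_assoc', div_le_one hδ]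
      nlinarith
    have hxa : x ^ a = (x ^ δ) ^ (a / δ) := by
      rw [← Real.rpow_mul hx]
      congr 1
      field_simp
    have hC := keyC hy hr hp hpr
    calc a * (x ^ a + p) * (1 - x ^ δ)
        = δ * (a / δ * ((x ^ δ) ^ (a / δ) + p) * (1 - x ^ δ)) := by
          rw [← hxa]; field_simp; try ring
      _ ≤ δ * ((1 + p) * (1 - (x ^ δ) ^ (a / δ))) :=
          mul_le_mul_of_nonneg_left hC (le_of_lt hδ)
      _ = δ * (1 + p) * (1 - x ^ a) := by rw [← hxa]; ring

/-- Under the condition `δ ≥ (2-ε)p/(1+p)`, the function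
`f(x) = x^{2-ε}/(x^{2-ε}+p) - ((2-ε)p/(δ(1+p)²)) x^δ` attains its global
maximum on `[0,∞)` at `x = 1`. -/
theorem manager_f_max_at_one
    (p ε δ : ℝ) (hp : 0 < p) (hε : ε ∈ Set.Icc (0:ℝ) 1) (hδ : 0 < δ)
    (hcond : (2 - ε) * p / (1 + p) ≤ δ) :
    ∀ x : ℝ, 0 ≤ x →
      x ^ (2 - ε) / (x ^ (2 - ε) + p) - (2 - ε) * p / (δ * (1 + p) ^ 2) * x ^ δ
        ≤ (1:ℝ) ^ (2 - ε) / ((1:ℝ) ^ (2 - ε) + p)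
            - (2 - ε) * p / (δ * (1 + p) ^ 2) * (1:ℝ) ^ δ := by
  intro x hx
  obtain ⟨hε0, hε1⟩ := hε
  set a : ℝ := 2 - ε with ha_def
  have ha : 0 < a := by simp only [ha_def]; linarith
  have h1p : (0:ℝ) < 1 + p := by linarith
  have hcond' : a * p ≤ δ * (1 + p) := by
    rw [div_le_iff₀ h1p] at hcond
    linarith
  have star := star_ineq hp ha hδ hcond' x hx
  have hxa : (0:ℝ) ≤ x ^ a := Real.rpow_nonneg hx a
  have hden : (0:ℝ) < x ^ a + p := by linarith
  rw [Real.one_rpow, Real.one_rpow]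
  have h : a * p / (δ * (1 + p) ^ 2) * (1 - x ^ δ)
      ≤ p * (1 - x ^ a) / ((1 + p) * (x ^ a + p)) := by
    rw [div_mul_eq_mul_div, div_le_div_iff₀ (by positivity) (by positivity)]
    nlinarith [mul_le_mul_of_nonneg_left star (show (0:ℝ) ≤ p * (1 + p) by positivity)]
  have id1 : 1 / (1 + p) - x ^ a / (x ^ a + p)
      = p * (1 - x ^ a) / ((1 + p) * (x ^ a + p)) := by
    field_simp
    ring
  nlinarith [h, id1]
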